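/- There is a constant c > 0 such that for every n > 1 there exists a finitary Büchi automaton A_n over the alphabet Σ_I × Σ_O with Σ_I = Σ_O = {1, …, n, #}, with at most c·n states, such that: (i) for every delay function f, Player O wins Γ_f(L(A_n)) if, and only if, f(0) ≥ 2^n + 1; and (ii) for every delay function f with f(0) ≥ 2^n + 1, an optimal winning strategy for Player O in Γ_f(L(A_n)) exists and has cost exactly 2^n + 1. -/

import Mathlib

attribute [local instance] Classical.propDecidable

noncomputable section

/-- A parity automaton with costs `(Q, A, qI, δ, Ω, Cst)`.
`Cst q a = true` means that the transition `(q, a, δ q a)` is an increment-transition,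
`Cst q a = false` means it is an `ε`-transition. -/
structure PACost (Q : Type) (A : Type) where
  qI : Q
  δ : Q → A → Q
  Ω : Q → ℕ
  Cst : Q → A → Bool

namespace PACost

variable {Q A : Type}

/-- The state reached after processing the first `n` letters of `w` starting in `q0`. -/
def stateAt (M : PACost Q A) (q0 : Q) (w : ℕ → A) : ℕ → Q
  | 0 => q0
  | n + 1 => M.δ (stateAt M q0 w n) (w n)

/-- The cost (number of increment-transitions) of the run infix between positions `m` and `n`. -/
def segCost (M : PACost Q A) (q0 : Q) (w : ℕ → A) (m n : ℕ) : ℕ :=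
  ((Finset.Ico m n).filter fun j => M.Cst (stateAt M q0 w j) (w j) = true).card

/-- `Ans c`: the set of even colors of `M` that are larger than `c`. -/
def Ans (M : PACost Q A) (c : ℕ) : Set ℕ :=
  { c' | (∃ q, M.Ω q = c') ∧ c < c' ∧ Even c' }

/-- The cost-of-response at position `n` of the run of `M` on `w` starting in `q0`. -/
def Cor (M : PACost Q A) (q0 : Q) (w : ℕ → A) (n : ℕ) : ℕ∞ :=
  if Even (M.Ω (stateAt M q0 w n)) then 0
  else
    sInf { c : ℕ∞ | ∃ n', n < n' ∧
      M.Ω (stateAt M q0 w n') ∈ M.Ans (M.Ω (stateAt M q0 w n)) ∧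
      c = (segCost M q0 w n n' : ℕ∞) }

/-- The run of `M` on `w` starting in `q0` satisfies the parity condition with costs. -/
def Accepting (M : PACost Q A) (q0 : Q) (w : ℕ → A) : Prop :=
  Filter.limsup (fun n => Cor M q0 w n) Filter.atTop < ⊤

/-- The language of `M`. -/
def Lang (M : PACost Q A) : Set (ℕ → A) := { w | Accepting M M.qI w }

/-- `M` is a finitary Büchi automaton: every transition is an increment-transition and
all colors are `1` or `2`. -/
def FinBuchi (M : PACost Q A) : Prop :=
  (∀ q a, M.Cst q a = true) ∧ ∀ q, M.Ω q = 1 ∨ M.Ω q = 2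

end PACost

/-- The finite segment `w m, w (m+1), …, w (n-1)` of an infinite word `w`. -/
def seg {A : Type} (w : ℕ → A) (m n : ℕ) : List A :=
  (List.range (n - m)).map fun i => w (m + i)

section DelayGames

variable {I O : Type}

/-- The `n`-th letter of the concatenation `u 0 ++ u 1 ++ u 2 ++ ⋯`
(well-defined whenever all blocks are non-empty). -/
def flatWord [Inhabited I] (u : ℕ → List I) (n : ℕ) : I :=
  (((List.range (n + 1)).map u).flatten).getD n default

/-- A delay function maps every round to a positive number of letters. -/
def DelayFn (f : ℕ → ℕ) : Prop := ∀ i, 0 < f i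

/-- The constant delay function `f_k` with `f_k 0 = k + 1` and `f_k i = 1` for `i > 0`. -/
def constDF (k : ℕ) : ℕ → ℕ := fun i => if i = 0 then k + 1 else 1

/-- The sequence of letters Player I has produced up to (and including) round `i`. -/
def oHist (u : ℕ → List I) (i : ℕ) : List I := ((List.range (i + 1)).map u).flatten

/-- `τO` is a winning strategy for Player O in the delay game with delay function `f`
and winning condition `L`. -/
def OWinning [Inhabited I] (f : ℕ → ℕ) (L : Set (ℕ → I × O)) (τO : List I → O) : Prop :=
  ∀ u : ℕ → List I, ∀ v : ℕ → O,
    (∀ i, (u i).length = f i) →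
    (∀ i, v i = τO (oHist u i)) →
    (fun n => (flatWord u n, v n)) ∈ L

/-- Player O wins the delay game `Γ_f(L)`. -/
def OWins [Inhabited I] (f : ℕ → ℕ) (L : Set (ℕ → I × O)) : Prop :=
  ∃ τO : List I → O, OWinning f L τO

/-- `τI` is a winning strategy for Player I in the delay game with delay function `f`
and winning condition `L`. -/
def IWinning [Inhabited I] (f : ℕ → ℕ) (L : Set (ℕ → I × O)) (τI : List O → List I) : Prop :=
  (∀ w, (τI w).length = f w.length) ∧
  ∀ u : ℕ → List I, ∀ v : ℕ → O,
    (∀ i, u i = τI ((List.range i).map v)) →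
    (fun n => (flatWord u n, v n)) ∉ L

/-- Player I wins the delay game `Γ_f(L)`. -/
def IWins [Inhabited I] (f : ℕ → ℕ) (L : Set (ℕ → I × O)) : Prop :=
  ∃ τI : List O → List I, IWinning f L τI

/-- The cost of a strategy `τO` of Player O: the supremum of the word-costs `wc` of the
outcomes of plays consistent with `τO`. -/
def stratCost [Inhabited I] (wc : (ℕ → I × O) → ℕ∞) (f : ℕ → ℕ) (τO : List I → O) : ℕ∞ :=
  ⨆ (u : ℕ → List I) (v : ℕ → O)
    (_ : (∀ i, (u i).length = f i) ∧ ∀ i, v i = τO (oHist u i)),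
    wc (fun n => (flatWord u n, v n))

/-- An optimal winning strategy for Player O in `Γ_f(L)` exists and has cost `c`. -/
def OptimalCostIs [Inhabited I] (L : Set (ℕ → I × O)) (wc : (ℕ → I × O) → ℕ∞)
    (f : ℕ → ℕ) (c : ℕ∞) : Prop :=
  (∃ τO, OWinning f L τO ∧ stratCost wc f τO = c) ∧
  ∀ τO, OWinning f L τO → c ≤ stratCost wc f τO

end DelayGames

/-- The cost `limsup_n Cor(ρ(w), n)` of the run of `M` on an infinite word `w`. -/
def PACost.wCost {Q I O : Type} (M : PACost Q (I × O)) : (ℕ → I × O) → ℕ∞ :=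
  fun w => Filter.limsup (fun n => PACost.Cor M M.qI w n) Filter.atTop


namespace S3

open Filter

/-! ### Ruler sequence combinatorics -/

def rf (t : ℕ) : ℕ := padicValNat 2 (t+1)

lemma rf_dvd (t : ℕ) : 2 ^ rf t ∣ (t+1) := pow_padicValNat_dvd

lemma rf_not_dvd (t : ℕ) : ¬ 2 ^ (rf t + 1) ∣ (t+1) :=
  pow_succ_padicValNat_not_dvd (by omega)

lemma rf_lt {t k : ℕ} (h : t + 1 < 2 ^ k) : rf t < k := by
  have h1 := rf_dvd t
  have h2 : 2 ^ rf t ≤ t + 1 := Nat.le_of_dvd (by omega) h1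
  by_contra hc
  push_neg at hc
  have : (2:ℕ) ^ k ≤ 2 ^ rf t := Nat.pow_le_pow_right (by omega) hc
  omega

lemma rf_zero : rf 0 = 0 := by
  simp [rf]

lemma rf_last {n : ℕ} (hn : 0 < n) : rf (2^n - 2) = 0 := by
  have h1 : (2:ℕ) ∣ 2^n := dvd_pow_self 2 hn.ne'
  have h2 : (2:ℕ)^n ≥ 2 := by
    calc (2:ℕ) = 2^1 := by norm_num
    _ ≤ 2^n := Nat.pow_le_pow_right (by omega) hn
  have h3 : (2^n - 2) + 1 = 2^n - 1 := by omega
  rw [rf, h3]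
  apply padicValNat.eq_zero_of_not_dvd
  omega

lemma rf_between {p q : ℕ} (hpq : p < q) (heq : rf p = rf q) :
    ∃ r, p < r ∧ r < q ∧ rf q < rf r := by
  set j := rf q with hj
  have hp : 2 ^ j ∣ p + 1 := heq ▸ rf_dvd p
  have hq : 2 ^ j ∣ q + 1 := rf_dvd q
  obtain ⟨a, ha⟩ := hp
  obtain ⟨b, hb⟩ := hq
  have hpow : 0 < 2 ^ j := Nat.two_pow_pos j
  have hna : ¬ 2 ∣ a := by
    rintro ⟨c, hc⟩
    apply heq ▸ rf_not_dvd p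
    exact ⟨c, by rw [ha, hc, pow_succ]; ring⟩
  have hnb : ¬ 2 ∣ b := by
    rintro ⟨c, hc⟩
    apply rf_not_dvd q
    rw [← hj]
    exact ⟨c, by rw [hb, hc, pow_succ]; ring⟩
  have hab : a < b := by
    have : 2^j * a < 2^j * b := by omega
    exact Nat.lt_of_mul_lt_mul_left this
  have hab2 : a + 1 < b := by omega
  have hr1 : 2^j * a < 2^j * (a+1) := mul_lt_mul_of_pos_left (by omega) hpow
  have hr2 : 2^j * (a+1) < 2^j * b := mul_lt_mul_of_pos_left (by omega) hpow
  refine ⟨2^j * (a+1) - 1, by omega, by omega, ?_⟩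
  have hnz : 2^j * (a+1) ≥ 1 := Nat.mul_pos hpow (by omega)
  have hdvd : 2 ^ (j+1) ∣ (2^j*(a+1) - 1) + 1 := by
    have hE : (2^j*(a+1) - 1) + 1 = 2^j*(a+1) := by omega
    rw [hE]
    obtain ⟨c, hc⟩ : 2 ∣ a + 1 := by omega
    exact ⟨c, by rw [hc, pow_succ]; ring⟩
  have := (padicValNat_dvd_iff (p := 2) (n := j+1) (a := (2^j*(a+1) - 1) + 1)).mp hdvd
  rcases this with h | h
  · omega
  · exact h

/-- Any `2^k` consecutive positions with values `< k` contain a "flaw pattern". -/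
lemma exists_pattern (α : ℕ → ℕ) :
    ∀ k a b, (∀ r, a ≤ r → r < b → α r < k) → a + 2 ^ k ≤ b →
    ∃ p q, a ≤ p ∧ p < q ∧ q < b ∧ α p = α q ∧ ∀ r, p < r → r < q → α r ≤ α p := by
  intro k
  induction k with
  | zero =>
    intro a b hlt hlen
    exact absurd (hlt a le_rfl (by omega)) (by omega)
  | succ k ih =>
    intro a b hlt hlen
    have hp0 : 0 < 2^k := Nat.two_pow_pos k
    have hps : (2:ℕ)^(k+1) = 2^k + 2^k := by rw [pow_succ]; ring
    by_cases h2 : ∃ p q, a ≤ p ∧ p < q ∧ q < b ∧ α p = k ∧ α q = k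
    · obtain ⟨p, q, h1, h2', h3, h4, h5⟩ := h2
      refine ⟨p, q, h1, h2', h3, by omega, fun r hr1 hr2 => ?_⟩
      have := hlt r (by omega) (by omega)
      omega
    · push_neg at h2
      by_cases hm : ∃ m, a ≤ m ∧ m < b ∧ α m = k
      · obtain ⟨m, hm1, hm2, hm3⟩ := hm
        have hno : ∀ r, a ≤ r → r < b → r ≠ m → α r ≠ k := by
          intro r h1 h1' h3 h4
          rcases Nat.lt_or_ge r m with h | h
          · exact h2 r m h1 h hm2 h4 hm3
          · exact h2 m r hm1 (by omega) h1' hm3 h4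
        rcases le_or_gt (a + 2^k) m with hsplit | hsplit
        · obtain ⟨p, q, k1, k2, k3, k4, k5⟩ :=
            ih a m (fun r hr1 hr2 => by
              have h5 := hlt r hr1 (by omega)
              have h6 := hno r hr1 (by omega) (by omega)
              omega) hsplit
          exact ⟨p, q, k1, k2, by omega, k4, k5⟩
        · obtain ⟨p, q, k1, k2, k3, k4, k5⟩ :=
            ih (m+1) b (fun r hr1 hr2 => by
              have h5 := hlt r (by omega) hr2
              have h6 := hno r (by omega) hr2 (by omega)
              omega) (by omega)
          exact ⟨p, q, by omega, k2, k3, k4, k5⟩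
      · push_neg at hm
        apply ih a b (fun r hr1 hr2 => by
          have h5 := hlt r hr1 hr2
          have h6 := hm r hr1 hr2
          omega) (by omega)

/-! ### The automaton -/

/-- States of the automaton `A_n`. -/
inductive St (n : ℕ) : Type where
  | rest | breath | bad | finit
  | ll (i : Fin n) (f : Bool)
  | fl (j : Fin n) (f : Bool)
deriving DecidableEq

/-- The `#` letter. -/
def hsh (n : ℕ) : Fin (n+1) := ⟨n, Nat.lt_succ_self n⟩

/-- Transition function. -/
def trans (n : ℕ) (s : St n) (x : Fin (n+1) × Fin (n+1)) : St n :=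
  match s with
  | .rest => if h : x.2.val < n then .ll ⟨x.2.val, h⟩ false else .finit
  | .finit =>
      if h : x.2.val < n then
        (if x.1.val = n then .bad else .fl ⟨x.2.val, h⟩ (decide (x.1.val = x.2.val)))
      else (if x.1.val = n then .breath else .bad)
  | .ll i f => if x.1.val = n then (if f then .breath else .bad)
      else .ll i (decide (x.1.val = i.val))
  | .fl j f => if x.1.val = n then .bad
      else if x.1.val = j.val then (if f then .breath else .fl j true)
      else .fl j (f && decide (x.1.val < j.val))
  | .breath => .rest
  | .bad => .bad

def Ωst {n : ℕ} : St n → ℕ := fun s => match s with | .rest => 2 | _ => 1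

lemma Ωst_cases {n : ℕ} (s : St n) : Ωst s = 1 ∨ Ωst s = 2 := by
  cases s <;> simp [Ωst]

lemma Ωst_eq_two_iff {n : ℕ} (s : St n) : Ωst s = 2 ↔ s = .rest := by
  cases s <;> simp [Ωst]

lemma even_Ωst_iff {n : ℕ} (s : St n) : Even (Ωst s) ↔ s = .rest := by
  cases s <;> simp [Ωst, Nat.even_iff]

def enc (n : ℕ) : St n → ℕ
  | .rest => 0 | .breath => 1 | .bad => 2 | .finit => 3
  | .ll i f => 4 + i.val + (cond f n 0)
  | .fl j f => 4 + 2*n + j.val + (cond f n 0)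

lemma enc_lt {n : ℕ} (s : St n) : enc n s < 4*n + 4 := by
  cases s with
  | ll i f => have := i.isLt; cases f <;> simp only [enc, cond] <;> omega
  | fl j f => have := j.isLt; cases f <;> simp only [enc, cond] <;> omega
  | rest => simp only [enc]; omega
  | breath => simp only [enc]; omega
  | bad => simp only [enc]; omega
  | finit => simp only [enc]; omega

def dec (n : ℕ) (v : ℕ) : St n :=
  if h0 : v = 0 then .rest else if h1 : v = 1 then .breath else if h2 : v = 2 then .bad
  else if h3 : v = 3 then .finit
  else if h : v < 4 + n then .ll ⟨v - 4, by omega⟩ false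
  else if h : v < 4 + 2*n then .ll ⟨v - (4+n), by omega⟩ true
  else if h : v < 4 + 3*n then .fl ⟨v - (4+2*n), by omega⟩ false
  else if h : v < 4 + 4*n then .fl ⟨v - (4+3*n), by omega⟩ true
  else .bad

lemma dec_enc {n : ℕ} (s : St n) : dec n (enc n s) = s := by
  cases s with
  | rest => simp [enc, dec]
  | breath => simp [enc, dec]
  | bad => simp [enc, dec]
  | finit => simp [enc, dec]
  | ll i f =>
    have hi := i.isLt
    cases f
    · show dec n (4 + i.val + 0) = _
      unfold dec
      rw [dif_neg (by omega), dif_neg (by omega), dif_neg (by omega), dif_neg (by omega),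
        dif_pos (by omega)]
      congr 1
      apply Fin.ext
      show 4 + i.val + 0 - 4 = i.val
      omega
    · show dec n (4 + i.val + n) = _
      unfold dec
      rw [dif_neg (by omega), dif_neg (by omega), dif_neg (by omega), dif_neg (by omega),
        dif_neg (by omega), dif_pos (by omega)]
      congr 1
      apply Fin.ext
      show 4 + i.val + n - (4 + n) = i.val
      omega
  | fl j f =>
    have hj := j.isLt
    cases f
    · show dec n (4 + 2*n + j.val + 0) = _
      unfold dec
      rw [dif_neg (by omega), dif_neg (by omega), dif_neg (by omega), dif_neg (by omega),
        dif_neg (by omega), dif_neg (by omega), dif_pos (by omega)]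
      congr 1
      apply Fin.ext
      show 4 + 2*n + j.val + 0 - (4 + 2*n) = j.val
      omega
    · show dec n (4 + 2*n + j.val + n) = _
      unfold dec
      rw [dif_neg (by omega), dif_neg (by omega), dif_neg (by omega), dif_neg (by omega),
        dif_neg (by omega), dif_neg (by omega), dif_neg (by omega), dif_pos (by omega)]
      congr 1
      apply Fin.ext
      show 4 + 2*n + j.val + n - (4 + 3*n) = j.val
      omega

/-- The finitary Büchi automaton `A_n`. -/
def Mach (n : ℕ) : PACost (Fin (4*n+4)) (Fin (n+1) × Fin (n+1)) where
  qI := ⟨enc n .rest, enc_lt _⟩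
  δ := fun q x => ⟨enc n (trans n (dec n q.val) x), enc_lt _⟩
  Ω := fun q => Ωst (dec n q.val)
  Cst := fun _ _ => true

/-- The abstract run of the automaton. -/
def run (n : ℕ) (w : ℕ → Fin (n+1) × Fin (n+1)) : ℕ → St n
  | 0 => .rest
  | p+1 => trans n (run n w p) (w p)

lemma stateAt_eq (n : ℕ) (w : ℕ → Fin (n+1) × Fin (n+1)) (p : ℕ) :
    PACost.stateAt (Mach n) (Mach n).qI w p = ⟨enc n (run n w p), enc_lt _⟩ := by
  induction p with
  | zero => rfl
  | succ p ih =>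
    show (Mach n).δ (PACost.stateAt (Mach n) (Mach n).qI w p) (w p) = _
    rw [ih]
    apply Fin.ext
    show enc n (trans n (dec n (enc n (run n w p))) (w p)) = enc n (run n w (p+1))
    rw [dec_enc]
    rfl

lemma omega_stateAt (n : ℕ) (w : ℕ → Fin (n+1) × Fin (n+1)) (p : ℕ) :
    (Mach n).Ω (PACost.stateAt (Mach n) (Mach n).qI w p) = Ωst (run n w p) := by
  rw [stateAt_eq]
  show Ωst (dec n (enc n (run n w p))) = _
  rw [dec_enc]

/-! ### Cost-of-response computations -/

section CorLemmas

variable {n : ℕ} {w : ℕ → Fin (n+1) × Fin (n+1)}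

lemma segCost_eq (q0 : Fin (4*n+4)) (p q : ℕ) :
    PACost.segCost (Mach n) q0 w p q = q - p := by
  unfold PACost.segCost
  have h : ∀ j ∈ Finset.Ico p q, (Mach n).Cst (PACost.stateAt (Mach n) q0 w j) (w j) = true :=
    fun j _ => rfl
  rw [Finset.filter_true_of_mem h, Nat.card_Ico]

lemma Ω_qI (n : ℕ) : (Mach n).Ω (Mach n).qI = 2 := by
  show Ωst (dec n (enc n .rest)) = 2
  rw [dec_enc]
  rfl

lemma cor_rest (p : ℕ) (h : run n w p = .rest) :
    PACost.Cor (Mach n) (Mach n).qI w p = 0 := by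
  unfold PACost.Cor
  rw [if_pos (by rw [omega_stateAt]; exact (even_Ωst_iff _).2 h)]

lemma cor_nonrest (p : ℕ) (h : run n w p ≠ .rest) :
    PACost.Cor (Mach n) (Mach n).qI w p
      = sInf {c : ℕ∞ | ∃ q, p < q ∧ run n w q = .rest ∧ c = ((q - p : ℕ) : ℕ∞)} := by
  have hp1 : Ωst (run n w p) = 1 := by
    rcases Ωst_cases (run n w p) with h1 | h1
    · exact h1
    · exact absurd ((Ωst_eq_two_iff _).1 h1) h
  unfold PACost.Cor
  rw [if_neg (by rw [omega_stateAt]; exact fun he => h ((even_Ωst_iff _).1 he))]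
  congr 1
  ext c
  simp only [Set.mem_setOf_eq]
  constructor
  · rintro ⟨q, hq1, hq2, hq3⟩
    refine ⟨q, hq1, ?_, by rw [hq3, segCost_eq]⟩
    rw [omega_stateAt, hp1] at hq2
    obtain ⟨_, hgt, hev⟩ := hq2
    rw [omega_stateAt] at hgt hev
    rcases Ωst_cases (run n w q) with h1 | h1
    · rw [h1] at hgt; omega
    · exact (Ωst_eq_two_iff _).1 h1
  · rintro ⟨q, hq1, hq2, hq3⟩
    refine ⟨q, hq1, ?_, by rw [hq3, segCost_eq]⟩
    rw [omega_stateAt, hp1, omega_stateAt, (Ωst_eq_two_iff _).2 hq2]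
    exact ⟨⟨(Mach n).qI, Ω_qI n⟩, by omega, by decide⟩

lemma cor_le {p q : ℕ} (h : run n w p ≠ .rest) (hq : run n w q = .rest) (hpq : p < q) :
    PACost.Cor (Mach n) (Mach n).qI w p ≤ ((q - p : ℕ) : ℕ∞) := by
  rw [cor_nonrest p h]
  exact sInf_le ⟨q, hpq, hq, rfl⟩

lemma cor_top {p : ℕ} (h : run n w p ≠ .rest) (hq : ∀ q, p < q → run n w q ≠ .rest) :
    PACost.Cor (Mach n) (Mach n).qI w p = ⊤ := by
  rw [cor_nonrest p h]
  refine (congrArg sInf (?_ : _ = (∅ : Set ℕ∞))).trans sInf_empty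
  ext c
  simp only [Set.mem_setOf_eq, Set.mem_empty_iff_false, iff_false]
  rintro ⟨q, h1, h2, _⟩
  exact hq q h1 h2

lemma cor_eq {p q : ℕ} (h : run n w p ≠ .rest) (hq : run n w q = .rest) (hpq : p < q)
    (hbet : ∀ r, p < r → r < q → run n w r ≠ .rest) :
    PACost.Cor (Mach n) (Mach n).qI w p = ((q - p : ℕ) : ℕ∞) := by
  refine le_antisymm (cor_le h hq hpq) ?_
  rw [cor_nonrest p h]
  refine le_sInf ?_
  rintro c ⟨q', h1, h2, rfl⟩
  have hqq : q ≤ q' := by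
    by_contra hc
    push_neg at hc
    exact hbet q' h1 hc h2
  exact_mod_cast Nat.sub_le_sub_right hqq p

lemma accepting_of_bound (C : ℕ)
    (h : ∀ p, PACost.Cor (Mach n) (Mach n).qI w p ≤ (C : ℕ∞)) :
    PACost.Accepting (Mach n) (Mach n).qI w := by
  unfold PACost.Accepting
  have hls : Filter.limsup (fun p => PACost.Cor (Mach n) (Mach n).qI w p) Filter.atTop ≤ (C:ℕ∞) :=
    Filter.limsup_le_of_le (h := Filter.Eventually.of_forall h)
  exact lt_of_le_of_lt hls (by exact_mod_cast ENat.coe_lt_top C)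

lemma limsup_ge_of_often (C : ℕ∞)
    (h : ∀ K : ℕ, ∃ p, K ≤ p ∧ C ≤ PACost.Cor (Mach n) (Mach n).qI w p) :
    C ≤ Filter.limsup (fun p => PACost.Cor (Mach n) (Mach n).qI w p) Filter.atTop :=
  Filter.le_limsup_of_frequently_le (Filter.frequently_atTop.mpr (fun K => by
    obtain ⟨p, h1, h2⟩ := h K
    exact ⟨p, h1, h2⟩))

/-! ### Stepping lemmas -/

lemma run_succ (p : ℕ) : run n w (p+1) = trans n (run n w p) (w p) := rfl

lemma step_rest_ll {m : ℕ} (hr : run n w m = .rest) (hb : (w m).2.val < n) :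
    run n w (m+1) = .ll ⟨(w m).2.val, hb⟩ false := by
  rw [run_succ, hr]; simp only [trans]; rw [dif_pos hb]; try rfl

lemma step_rest_finit {m : ℕ} (hr : run n w m = .rest) (hb : ¬ (w m).2.val < n) :
    run n w (m+1) = .finit := by
  rw [run_succ, hr]; simp only [trans]; rw [dif_neg hb]; try rfl

lemma step_finit_breath {m : ℕ} (hr : run n w m = .finit) (hb : ¬ (w m).2.val < n)
    (ha : (w m).1.val = n) : run n w (m+1) = .breath := by
  rw [run_succ, hr]; simp only [trans]; rw [dif_neg hb, if_pos ha]; try rfl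

lemma step_finit_bad1 {m : ℕ} (hr : run n w m = .finit) (hb : ¬ (w m).2.val < n)
    (ha : ¬ (w m).1.val = n) : run n w (m+1) = .bad := by
  rw [run_succ, hr]; simp only [trans]; rw [dif_neg hb, if_neg ha]; try rfl

lemma step_finit_fl {m : ℕ} (hr : run n w m = .finit) (hb : (w m).2.val < n)
    (ha : ¬ (w m).1.val = n) :
    run n w (m+1) = .fl ⟨(w m).2.val, hb⟩ (decide ((w m).1.val = (w m).2.val)) := by
  rw [run_succ, hr]; simp only [trans]; rw [dif_pos hb, if_neg ha]; try rfl

lemma step_finit_bad2 {m : ℕ} (hr : run n w m = .finit) (hb : (w m).2.val < n)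
    (ha : (w m).1.val = n) : run n w (m+1) = .bad := by
  rw [run_succ, hr]; simp only [trans]; rw [dif_pos hb, if_pos ha]; try rfl

lemma step_ll {m : ℕ} {i : Fin n} {f : Bool} (hr : run n w m = .ll i f)
    (ha : ¬ (w m).1.val = n) :
    run n w (m+1) = .ll i (decide ((w m).1.val = i.val)) := by
  rw [run_succ, hr]; simp only [trans]; rw [if_neg ha]; try rfl

lemma step_ll_hash {m : ℕ} {i : Fin n} {f : Bool} (hr : run n w m = .ll i f)
    (ha : (w m).1.val = n) :
    run n w (m+1) = (if f then St.breath else St.bad) := by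
  rw [run_succ, hr]; simp only [trans]; rw [if_pos ha]; try rfl

lemma step_breath {m : ℕ} (hr : run n w m = .breath) : run n w (m+1) = .rest := by
  rw [run_succ, hr]; rfl

lemma step_bad {m : ℕ} (hr : run n w m = .bad) : run n w (m+1) = .bad := by
  rw [run_succ, hr]; rfl

lemma step_fl_hash {m : ℕ} {j : Fin n} {f : Bool} (hr : run n w m = .fl j f)
    (ha : (w m).1.val = n) : run n w (m+1) = .bad := by
  rw [run_succ, hr]; simp only [trans]; rw [if_pos ha]; try rfl

lemma step_fl_det {m : ℕ} {j : Fin n} (hr : run n w m = .fl j true)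
    (ha1 : ¬ (w m).1.val = n) (ha : (w m).1.val = j.val) : run n w (m+1) = .breath := by
  rw [run_succ, hr]; simp only [trans]; rw [if_neg ha1, if_pos ha]; try rfl

lemma step_fl_set {m : ℕ} {j : Fin n} (hr : run n w m = .fl j false)
    (ha1 : ¬ (w m).1.val = n) (ha : (w m).1.val = j.val) : run n w (m+1) = .fl j true := by
  rw [run_succ, hr]; simp only [trans]; rw [if_neg ha1, if_pos ha]; try rfl

lemma step_fl_other {m : ℕ} {j : Fin n} {f : Bool} (hr : run n w m = .fl j f)
    (ha1 : ¬ (w m).1.val = n) (ha : ¬ (w m).1.val = j.val) :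
    run n w (m+1) = .fl j (f && decide ((w m).1.val < j.val)) := by
  rw [run_succ, hr]; simp only [trans]; rw [if_neg ha1, if_neg ha]; try rfl

lemma bad_forever {p : ℕ} (h : run n w p = .bad) : ∀ q, p ≤ q → run n w q = .bad := by
  intro q hq
  refine Nat.le_induction h ?_ q hq
  intro m _ ih
  exact step_bad ih

lemma rejected_of_bad {p0 : ℕ} (hbad : run n w p0 = .bad) :
    ¬ PACost.Accepting (Mach n) (Mach n).qI w := by
  intro hacc
  have htop : ∀ p, p0 ≤ p → PACost.Cor (Mach n) (Mach n).qI w p = ⊤ := by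
    intro p hp
    refine cor_top ?_ ?_
    · rw [bad_forever hbad p hp]; simp
    · intro q hq
      rw [bad_forever hbad q (by omega)]; simp
  have hge := limsup_ge_of_often (w := w) ⊤ (fun K =>
    ⟨max K p0, le_max_left _ _, by rw [htop _ (le_max_right _ _)]⟩)
  exact absurd hacc (not_lt.mpr hge)

/-! ### Scanning lemmas -/

def FlagP (α : ℕ → Fin (n+1)) (j m s : ℕ) : Prop :=
  ∃ p, m+1 ≤ p ∧ p < s ∧ (α p).val = j ∧ ∀ r, p < r → r < s → (α r).val ≤ j

def DetP (α : ℕ → Fin (n+1)) (j m s : ℕ) : Prop := (α s).val = j ∧ FlagP α j m s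

lemma llscan {m e : ℕ} {i : Fin n} (hr : run n w (m+1) = .ll i false)
    (hnh : ∀ r, m+1 ≤ r → r < e → ¬ (w r).1.val = n) (he : m+2 ≤ e) :
    run n w e = .ll i (decide ((w (e-1)).1.val = i.val)) := by
  revert hnh
  induction e, he using Nat.le_induction with
  | base =>
    intro hnh
    have := step_ll hr (hnh (m+1) le_rfl (by omega))
    simpa using this
  | succ e he ih =>
    intro hnh
    have hrun_e := ih (fun r h1 h2 => hnh r h1 (by omega))
    have := step_ll hrun_e (hnh e (by omega) (by omega))
    simpa using this

lemma flscanA {m e : ℕ} {j : Fin n}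
    (hr : run n w (m+2) = .fl j (decide ((w (m+1)).1.val = j.val)))
    (hnh : ∀ r, m+1 ≤ r → r < e → ¬ (w r).1.val = n)
    (hnd : ∀ s, m+2 ≤ s → s < e → ¬ DetP (fun p => (w p).1) j.val m s)
    (he : m+2 ≤ e) :
    run n w e = .fl j (decide (FlagP (fun p => (w p).1) j.val m e)) := by
  revert hnh hnd
  induction e, he using Nat.le_induction with
  | base =>
    intro hnh hnd
    have hiff : FlagP (fun p => (w p).1) j.val m (m+2) ↔ (w (m+1)).1.val = j.val := by
      constructor
      · rintro ⟨p, h1, h2, h3, _⟩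
        have hp : p = m+1 := by omega
        subst hp; exact h3
      · intro h3
        exact ⟨m+1, le_rfl, by omega, h3, fun r hr1 hr2 => by omega⟩
    rw [hr]
    congr 1
    exact (decide_eq_decide).mpr hiff.symm
  | succ e he ih =>
    intro hnh hnd
    have hrun_e := ih (fun r h1 h2 => hnh r h1 (by omega)) (fun s h1 h2 => hnd s h1 (by omega))
    have hae : ¬ (w e).1.val = n := hnh e (by omega) (by omega)
    by_cases haj : (w e).1.val = j.val
    · have hnf : ¬ FlagP (fun p => (w p).1) j.val m e := fun hf => hnd e he (by omega) ⟨haj, hf⟩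
      rw [decide_eq_false hnf] at hrun_e
      rw [step_fl_set hrun_e hae haj]
      congr 1
      have hfl : FlagP (fun p => (w p).1) j.val m (e+1) :=
        ⟨e, by omega, by omega, haj, fun r h1 h2 => by omega⟩
      rw [decide_eq_true hfl]
    · by_cases hlt : (w e).1.val < j.val
      · rw [step_fl_other hrun_e hae haj]
        congr 1
        rw [decide_eq_true hlt, Bool.and_true]
        apply (decide_eq_decide).mpr
        constructor
        · rintro ⟨p, h1, h2, h3, h4⟩
          refine ⟨p, h1, by omega, h3, fun r hr1 hr2 => ?_⟩
          rcases Nat.lt_or_ge r e with h | h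
          · exact h4 r hr1 h
          · have hre : r = e := by omega
            subst hre
            exact Nat.le_of_lt hlt
        · rintro ⟨p, h1, h2, h3, h4⟩
          refine ⟨p, h1, ?_, h3, fun r hr1 hr2 => h4 r hr1 (by omega)⟩
          rcases Nat.lt_or_ge p e with h | h
          · exact h
          · exfalso
            have hpe : p = e := by omega
            subst hpe
            exact haj h3
      · rw [step_fl_other hrun_e hae haj]
        congr 1
        rw [decide_eq_false hlt, Bool.and_false]
        symm
        apply decide_eq_false
        rintro ⟨p, h1, h2, h3, h4⟩
        rcases Nat.lt_or_ge p e with h | h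
        · have h5 : (w e).1.val ≤ j.val := h4 e h (by omega)
          omega
        · have hpe : p = e := by omega
          subst hpe
          exact haj h3

lemma flscanB {m e : ℕ} {j : Fin n}
    (hr : run n w (m+2) = .fl j (decide ((w (m+1)).1.val = j.val)))
    (hnh : ∀ r, m+1 ≤ r → r < e → ¬ (w r).1.val = n)
    (hnd : ∀ s, m+2 ≤ s → s < e → ¬ DetP (fun p => (w p).1) j.val m s)
    (he : m+2 ≤ e) (hdet : DetP (fun p => (w p).1) j.val m e) :
    run n w (e+1) = .breath := by
  have h1 := flscanA hr hnh hnd he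
  rw [decide_eq_true hdet.2] at h1
  have hd1 : (w e).1.val = j.val := hdet.1
  have hae : ¬ (w e).1.val = n := by
    have := j.isLt
    omega
  exact step_fl_det h1 hae hd1

lemma flscanC {m e : ℕ} {j : Fin n}
    (hr : run n w (m+2) = .fl j (decide ((w (m+1)).1.val = j.val)))
    (hnh : ∀ r, m+1 ≤ r → r < e → ¬ (w r).1.val = n)
    (hnd : ∀ s, m+2 ≤ s → s < e → ¬ DetP (fun p => (w p).1) j.val m s)
    (he : m+2 ≤ e) (ha : (w e).1.val = n) :
    run n w (e+1) = .bad :=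
  step_fl_hash (flscanA hr hnh hnd he) ha

end CorLemmas


/-! ### Player O's canonical claims -/

section Claims

variable {n : ℕ}

def hasH1 (n : ℕ) (α : ℕ → Fin (n+1)) (m : ℕ) : Prop := (α (m+1)).val = n

def LLc (n : ℕ) (α : ℕ → Fin (n+1)) (m : ℕ) : Prop :=
  ∃ t, 2 ≤ t ∧ t ≤ 2^n ∧ (α (m+t)).val = n

def FLc (n : ℕ) (α : ℕ → Fin (n+1)) (m : ℕ) : Prop :=
  ∃ j, j < n ∧ ∃ s, m+2 ≤ s ∧ s ≤ m + 2^n ∧ DetP α j m s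

def claim1 (n : ℕ) (α : ℕ → Fin (n+1)) (m : ℕ) : Fin (n+1) :=
  if hasH1 n α m then hsh n
  else if h : LLc n α m then α (m + Nat.find h - 1)
  else hsh n

def claim2 (n : ℕ) (α : ℕ → Fin (n+1)) (m : ℕ) : Fin (n+1) :=
  if hasH1 n α m then hsh n
  else if LLc n α m then hsh n
  else if h : FLc n α m then ⟨Nat.find h, by have := (Nat.find_spec h).1; omega⟩
  else hsh n

def detPos (n : ℕ) (α : ℕ → Fin (n+1)) (m : ℕ) (h : FLc n α m) : ℕ :=
  Nat.find (Nat.find_spec h).2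

def nextR (n : ℕ) (α : ℕ → Fin (n+1)) (m : ℕ) : ℕ :=
  if hasH1 n α m then m+3
  else if h : LLc n α m then m + Nat.find h + 2
  else if h : FLc n α m then detPos n α m h + 2
  else m+3

def restSeq (n : ℕ) (α : ℕ → Fin (n+1)) : ℕ → ℕ
  | 0 => 0
  | k+1 => nextR n α (restSeq n α k)

def βfun (n : ℕ) (α : ℕ → Fin (n+1)) (p : ℕ) : Fin (n+1) :=
  if _ : ∃ k, restSeq n α k = p then claim1 n α p
  else if _ : ∃ k, restSeq n α k + 1 = p then claim2 n α (p-1)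
  else hsh n

lemma detPos_spec {α : ℕ → Fin (n+1)} {m : ℕ} (h : FLc n α m) :
    m+2 ≤ detPos n α m h ∧ detPos n α m h ≤ m + 2^n ∧ DetP α (Nat.find h) m (detPos n α m h) :=
  Nat.find_spec (Nat.find_spec h).2

lemma detPos_min {α : ℕ → Fin (n+1)} {m : ℕ} (h : FLc n α m) {s : ℕ}
    (hs : s < detPos n α m h) : ¬ (m+2 ≤ s ∧ s ≤ m + 2^n ∧ DetP α (Nat.find h) m s) :=
  Nat.find_min (Nat.find_spec h).2 hs

lemma nextR_lb (α : ℕ → Fin (n+1)) (m : ℕ) : m + 3 ≤ nextR n α m := by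
  unfold nextR
  split
  · omega
  · split
    · next h => have := (Nat.find_spec h).1; omega
    · split
      · next h => have := (detPos_spec h).1; omega
      · omega

lemma nextR_ub (α : ℕ → Fin (n+1)) (m : ℕ) : nextR n α m ≤ m + 2^n + 2 := by
  have h2n : 1 ≤ 2^n := Nat.one_le_two_pow
  unfold nextR
  split
  · omega
  · split
    · next h => have := (Nat.find_spec h).2.1; omega
    · split
      · next h => have := (detPos_spec h).2.1; omega
      · omega

lemma restSeq_succ (α : ℕ → Fin (n+1)) (k : ℕ) :
    restSeq n α (k+1) = nextR n α (restSeq n α k) := rfl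

lemma restSeq_lt (α : ℕ → Fin (n+1)) (k : ℕ) :
    restSeq n α k + 3 ≤ restSeq n α (k+1) := by
  rw [restSeq_succ]; exact nextR_lb α _

lemma restSeq_mono (α : ℕ → Fin (n+1)) {k1 k2 : ℕ} (h : k1 ≤ k2) :
    restSeq n α k1 ≤ restSeq n α k2 := by
  induction k2 with
  | zero => have : k1 = 0 := by omega
            subst this; exact le_rfl
  | succ k ih =>
    rcases Nat.lt_or_ge k1 (k+1) with h1 | h1
    · have := ih (by omega)
      have := restSeq_lt α k
      omega
    · have : k1 = k+1 := by omega
      subst this; exact le_rfl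

lemma restSeq_ge (α : ℕ → Fin (n+1)) (k : ℕ) : k ≤ restSeq n α k := by
  induction k with
  | zero => exact le_rfl
  | succ k ih => have := restSeq_lt α k; omega

lemma restSeq_not_plus_one (α : ℕ → Fin (n+1)) (k : ℕ) :
    ¬ ∃ k', restSeq n α k' = restSeq n α k + 1 := by
  rintro ⟨k', hk'⟩
  rcases Nat.lt_or_ge k' (k+1) with h | h
  · have := restSeq_mono α (show k' ≤ k by omega)
    omega
  · have := restSeq_mono α h
    have := restSeq_lt α k
    omega

/-- Any `#`-free window of length `2^n` enables a flaw claim. -/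
lemma pattern_window {α : ℕ → Fin (n+1)} {m : ℕ}
    (hnh : ∀ r, m+1 ≤ r → r ≤ m + 2^n → ¬ (α r).val = n) :
    FLc n α m := by
  obtain ⟨p, q, h1, h2, h3, h4, h5⟩ := exists_pattern (fun r => (α r).val) n (m+1) (m+1+2^n)
    (fun r hr1 hr2 => by
      show (α r).val < n
      have := (α r).isLt
      have := hnh r hr1 (by omega)
      omega)
    le_rfl
  refine ⟨(α p).val, ?_, q, by omega, by omega, h4.symm, p, h1, h2, rfl, h5⟩
  have := (α p).isLt
  have := hnh p h1 (by omega)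
  omega

/-! ### The cycle theorem -/

theorem cyc {w : ℕ → Fin (n+1) × Fin (n+1)} {m : ℕ}
    (hrest : run n w m = .rest)
    (hc1 : (w m).2 = claim1 n (fun p => (w p).1) m)
    (hc2 : (w (m+1)).2 = claim2 n (fun p => (w p).1) m) :
    run n w (nextR n (fun p => (w p).1) m) = .rest := by
  set α := fun p => (w p).1 with hαdef
  by_cases hH : hasH1 n α m
  · -- empty-block claim
    have hH' : (w (m+1)).1.val = n := hH
    have h1 : run n w (m+1) = .finit := by
      refine step_rest_finit hrest ?_
      rw [hc1]
      unfold claim1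
      rw [if_pos hH]
      show ¬ n < n
      omega
    have h2 : run n w (m+2) = .breath := by
      refine step_finit_breath h1 ?_ hH'
      rw [hc2]
      unfold claim2
      rw [if_pos hH]
      show ¬ n < n
      omega
    have h3 : run n w (m+3) = .rest := step_breath h2
    unfold nextR
    rw [if_pos hH]
    exact h3
  · by_cases hLL : LLc n α m
    · -- last-letter claim
      set t0 := Nat.find hLL with ht0
      obtain ⟨hsp1, hsp2, hsp3⟩ := Nat.find_spec hLL
      have hmin : ∀ t, t < t0 → ¬ (2 ≤ t ∧ t ≤ 2^n ∧ (α (m+t)).val = n) :=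
        fun t ht => Nat.find_min hLL ht
      have hnh : ∀ r, m+1 ≤ r → r < m + t0 → ¬ (w r).1.val = n := by
        intro r hr1 hr2 hcon
        rcases Nat.lt_or_ge r (m+2) with h | h
        · have hre : r = m+1 := by omega
          subst hre
          exact hH hcon
        · exact hmin (r - m) (by omega) ⟨by omega, by omega, by
            have : m + (r - m) = r := by omega
            rw [this]; exact hcon⟩
      have hlastv : ¬ (α (m + t0 - 1)).val = n := by
        rcases Nat.lt_or_ge (t0 - 1) 2 with h | h
        · have : m + t0 - 1 = m + 1 := by omega
          rw [this]; exact hH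
        · intro hcon
          exact hmin (t0 - 1) (by omega) ⟨by omega, by omega, by
            have : m + (t0 - 1) = m + t0 - 1 := by omega
            rw [this]; exact hcon⟩
      have hc1v : (w m).2.val = (α (m + t0 - 1)).val := by
        rw [hc1]; unfold claim1
        rw [if_neg hH, dif_pos hLL]
      have hb : (w m).2.val < n := by
        rw [hc1v]
        have := (α (m + t0 - 1)).isLt
        omega
      have h1 : run n w (m+1) = .ll ⟨(w m).2.val, hb⟩ false := step_rest_ll hrest hb
      have h2 : run n w (m + t0) = .ll ⟨(w m).2.val, hb⟩
          (decide ((w (m + t0 - 1)).1.val = (w m).2.val)) := by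
        have := llscan h1 hnh (by omega)
        have he : m + t0 - 1 = m + t0 - 1 := rfl
        simpa using this
      rw [decide_eq_true (show (w (m + t0 - 1)).1.val = (w m).2.val by rw [hc1v])] at h2
      have h3 : run n w (m + t0 + 1) = .breath := by
        have := step_ll_hash h2 (show (w (m + t0)).1.val = n from hsp3)
        simpa using this
      have h4 : run n w (m + t0 + 2) = .rest := step_breath h3
      unfold nextR
      rw [if_neg hH, dif_pos hLL]
      exact h4
    · -- flaw claim
      have hnhall : ∀ r, m+1 ≤ r → r ≤ m + 2^n → ¬ (w r).1.val = n := by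
        intro r hr1 hr2 hcon
        rcases Nat.lt_or_ge r (m+2) with h | h
        · have hre : r = m+1 := by omega
          subst hre
          exact hH hcon
        · exact hLL ⟨r - m, by omega, by omega, by
            have : m + (r - m) = r := by omega
            rw [this]; exact hcon⟩
      have hFL : FLc n α m := pattern_window hnhall
      set j0 := Nat.find hFL with hj0
      have hj0n : j0 < n := (Nat.find_spec hFL).1
      set s0 := detPos n α m hFL with hs0
      obtain ⟨hd1, hd2, hd3⟩ := detPos_spec hFL
      have h1 : run n w (m+1) = .finit := by
        refine step_rest_finit hrest ?_
        rw [hc1]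
        unfold claim1
        rw [if_neg hH, dif_neg hLL]
        show ¬ n < n
        omega
      have hc2v : (w (m+1)).2.val = j0 := by
        rw [hc2]; unfold claim2
        rw [if_neg hH, if_neg hLL, dif_pos hFL]
      have hb : (w (m+1)).2.val < n := by rw [hc2v]; exact hj0n
      have h2 : run n w (m+2) = .fl ⟨(w (m+1)).2.val, hb⟩
          (decide ((w (m+1)).1.val = (w (m+1)).2.val)) :=
        step_finit_fl h1 hb (hnhall (m+1) le_rfl (by have : 1 ≤ 2^n := Nat.one_le_two_pow; omega))
      have h2' : run n w (m+2) = .fl ⟨j0, hj0n⟩ (decide ((w (m+1)).1.val = j0)) := by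
        rw [h2]
        congr 1
        · exact Fin.ext hc2v
        · rw [hc2v]
      have h3 : run n w (s0 + 1) = .breath := by
        refine flscanB (j := ⟨j0, hj0n⟩) h2' (fun r hr1 hr2 => hnhall r hr1 (by omega))
          (fun s hs1 hs2 => ?_) hd1 hd3
        intro hdet
        exact detPos_min hFL hs2 ⟨hs1, by omega, hdet⟩
      have h4 : run n w (s0 + 2) = .rest := step_breath h3
      unfold nextR
      rw [if_neg hH, dif_neg hLL, dif_pos hFL]
      exact h4

/-! ### Chain of rest positions and the cost upper bound -/

lemma chain {w : ℕ → Fin (n+1) × Fin (n+1)}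
    (hβ : ∀ p, (w p).2 = βfun n (fun q => (w q).1) p) :
    ∀ k, run n w (restSeq n (fun q => (w q).1) k) = .rest := by
  intro k
  induction k with
  | zero => rfl
  | succ k ih =>
    have h1 : (w (restSeq n (fun q => (w q).1) k)).2
        = claim1 n (fun q => (w q).1) (restSeq n (fun q => (w q).1) k) := by
      rw [hβ]
      unfold βfun
      rw [dif_pos ⟨k, rfl⟩]
    have h2 : (w (restSeq n (fun q => (w q).1) k + 1)).2
        = claim2 n (fun q => (w q).1) (restSeq n (fun q => (w q).1) k) := by
      rw [hβ]
      unfold βfun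
      rw [dif_neg (restSeq_not_plus_one (fun q => (w q).1) k), dif_pos ⟨k, rfl⟩]
      simp only [Nat.add_sub_cancel]
    exact cyc ih h1 h2

lemma cor_ub {w : ℕ → Fin (n+1) × Fin (n+1)}
    (hβ : ∀ p, (w p).2 = βfun n (fun q => (w q).1) p) (p : ℕ) :
    PACost.Cor (Mach n) (Mach n).qI w p ≤ ((2^n + 1 : ℕ) : ℕ∞) := by
  have hub : ∃ k, p < restSeq n (fun q => (w q).1) (k+1) :=
    ⟨p, by have h1 := restSeq_ge (fun q => (w q).1) (p+1); omega⟩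
  obtain ⟨k, hk2, hk1⟩ : ∃ k, p < restSeq n (fun q => (w q).1) (k+1) ∧
      restSeq n (fun q => (w q).1) k ≤ p := by
    refine ⟨Nat.find hub, Nat.find_spec hub, ?_⟩
    rcases Nat.eq_zero_or_pos (Nat.find hub) with h | h
    · rw [h]; exact Nat.zero_le p
    · have h2 := Nat.find_min hub (show Nat.find hub - 1 < Nat.find hub by omega)
      push_neg at h2
      have he : Nat.find hub - 1 + 1 = Nat.find hub := by omega
      rw [he] at h2
      exact h2
  by_cases hp : run n w p = .rest
  · rw [cor_rest p hp]; exact zero_le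
  · have hq := chain hβ (k+1)
    have hne : p ≠ restSeq n (fun q => (w q).1) k := fun h => hp (by rw [h]; exact chain hβ k)
    have h3 : restSeq n (fun q => (w q).1) (k+1) ≤ restSeq n (fun q => (w q).1) k + 2^n + 2 := by
      rw [restSeq_succ]; exact nextR_ub _ _
    refine le_trans (cor_le hp hq hk2) (Nat.cast_le.mpr ?_)
    omega

end Claims


/-! ### Window congruence -/

section Window

variable {n : ℕ}

lemma find_eq_of_iff {P Q : ℕ → Prop} [DecidablePred P] [DecidablePred Q]
    (hP : ∃ x, P x) (hQ : ∃ x, Q x)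
    (h : ∀ x, P x ↔ Q x) : Nat.find hP = Nat.find hQ :=
  le_antisymm (Nat.find_le ((h _).mpr (Nat.find_spec hQ)))
    (Nat.find_le ((h _).mp (Nat.find_spec hP)))

variable {α α' : ℕ → Fin (n+1)} {m : ℕ}

lemma hasH1_congr (hag : ∀ r, r ≤ m + 2^n → α r = α' r) : hasH1 n α m ↔ hasH1 n α' m := by
  unfold hasH1
  rw [hag (m+1) (by have : (1:ℕ) ≤ 2^n := Nat.one_le_two_pow; omega)]

lemma DetP_congr (hag : ∀ r, r ≤ m + 2^n → α r = α' r) (j s : ℕ) (hs : s ≤ m + 2^n) :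
    DetP α j m s ↔ DetP α' j m s := by
  unfold DetP FlagP
  constructor
  · rintro ⟨h1, p, g1, g2, g3, g4⟩
    exact ⟨by rw [← hag s hs]; exact h1, p, g1, g2, by rw [← hag p (by omega)]; exact g3,
      fun r hr1 hr2 => by rw [← hag r (by omega)]; exact g4 r hr1 hr2⟩
  · rintro ⟨h1, p, g1, g2, g3, g4⟩
    exact ⟨by rw [hag s hs]; exact h1, p, g1, g2, by rw [hag p (by omega)]; exact g3,
      fun r hr1 hr2 => by rw [hag r (by omega)]; exact g4 r hr1 hr2⟩

lemma LLcP_congr (hag : ∀ r, r ≤ m + 2^n → α r = α' r) (t : ℕ) :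
    (2 ≤ t ∧ t ≤ 2^n ∧ (α (m+t)).val = n) ↔ (2 ≤ t ∧ t ≤ 2^n ∧ (α' (m+t)).val = n) := by
  constructor
  · rintro ⟨h1, h2, h3⟩
    exact ⟨h1, h2, by rw [← hag (m+t) (by omega)]; exact h3⟩
  · rintro ⟨h1, h2, h3⟩
    exact ⟨h1, h2, by rw [hag (m+t) (by omega)]; exact h3⟩

lemma FLcP_congr (hag : ∀ r, r ≤ m + 2^n → α r = α' r) (j : ℕ) :
    (j < n ∧ ∃ s, m+2 ≤ s ∧ s ≤ m + 2^n ∧ DetP α j m s)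
      ↔ (j < n ∧ ∃ s, m+2 ≤ s ∧ s ≤ m + 2^n ∧ DetP α' j m s) := by
  apply and_congr_right'
  apply exists_congr
  intro s
  constructor
  · rintro ⟨h1, h2, h3⟩
    exact ⟨h1, h2, (DetP_congr hag j s h2).mp h3⟩
  · rintro ⟨h1, h2, h3⟩
    exact ⟨h1, h2, (DetP_congr hag j s h2).mpr h3⟩

lemma claims_congr (hag : ∀ r, r ≤ m + 2^n → α r = α' r) :
    claim1 n α m = claim1 n α' m ∧ claim2 n α m = claim2 n α' m ∧ nextR n α m = nextR n α' m := by
  have hh := hasH1_congr hag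
  have hLL : LLc n α m ↔ LLc n α' m := exists_congr (LLcP_congr hag)
  have hFL : FLc n α m ↔ FLc n α' m := exists_congr (FLcP_congr hag)
  have hdetpos : ∀ (h2 : FLc n α m) (h2' : FLc n α' m),
      detPos n α m h2 = detPos n α' m h2' := by
    intro h2 h2'
    have jeq : Nat.find h2 = Nat.find h2' := find_eq_of_iff _ _ (FLcP_congr hag)
    unfold detPos
    apply find_eq_of_iff
    intro s
    constructor
    · rintro ⟨g1, g2, g3⟩
      exact ⟨g1, g2, by rw [← jeq]; exact (DetP_congr hag _ s g2).mp g3⟩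
    · rintro ⟨g1, g2, g3⟩
      exact ⟨g1, g2, (DetP_congr hag _ s g2).mpr (by rw [jeq]; exact g3)⟩
  refine ⟨?_, ?_, ?_⟩
  · unfold claim1
    by_cases h1 : hasH1 n α m
    · rw [if_pos h1, if_pos (hh.mp h1)]
    · rw [if_neg h1, if_neg (fun hc => h1 (hh.mpr hc))]
      by_cases h2 : LLc n α m
      · rw [dif_pos h2, dif_pos (hLL.mp h2)]
        have hfe : Nat.find h2 = Nat.find (hLL.mp h2) := find_eq_of_iff _ _ (LLcP_congr hag)
        rw [← hfe]
        apply hag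
        have := (Nat.find_spec h2).2.1
        omega
      · rw [dif_neg h2, dif_neg (fun hc => h2 (hLL.mpr hc))]
  · unfold claim2
    by_cases h1 : hasH1 n α m
    · rw [if_pos h1, if_pos (hh.mp h1)]
    · rw [if_neg h1, if_neg (fun hc => h1 (hh.mpr hc))]
      by_cases h2 : LLc n α m
      · rw [if_pos h2, if_pos (hLL.mp h2)]
      · rw [if_neg h2, if_neg (fun hc => h2 (hLL.mpr hc))]
        by_cases h3 : FLc n α m
        · rw [dif_pos h3, dif_pos (hFL.mp h3)]
          exact Fin.ext (find_eq_of_iff _ _ (FLcP_congr hag))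
        · rw [dif_neg h3, dif_neg (fun hc => h3 (hFL.mpr hc))]
  · unfold nextR
    by_cases h1 : hasH1 n α m
    · rw [if_pos h1, if_pos (hh.mp h1)]
    · rw [if_neg h1, if_neg (fun hc => h1 (hh.mpr hc))]
      by_cases h2 : LLc n α m
      · rw [dif_pos h2, dif_pos (hLL.mp h2)]
        rw [find_eq_of_iff h2 (hLL.mp h2) (LLcP_congr hag)]
      · rw [dif_neg h2, dif_neg (fun hc => h2 (hLL.mpr hc))]
        by_cases h3 : FLc n α m
        · rw [dif_pos h3, dif_pos (hFL.mp h3)]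
          rw [hdetpos h3 (hFL.mp h3)]
        · rw [dif_neg h3, dif_neg (fun hc => h3 (hFL.mpr hc))]

lemma restSeq_congr {L : ℕ} (hag : ∀ r, r ≤ L + 2^n → α r = α' r) :
    ∀ k, restSeq n α k ≤ L → restSeq n α k = restSeq n α' k := by
  intro k
  induction k with
  | zero => intro _; rfl
  | succ k ih =>
    intro hk
    have hlt := restSeq_lt α k
    have h1 := ih (by omega)
    rw [restSeq_succ, restSeq_succ, ← h1]
    exact (claims_congr (fun r hr => hag r (by omega))).2.2

lemma βfun_congr {p : ℕ} (hag : ∀ r, r ≤ p + 2^n → α r = α' r) :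
    βfun n α p = βfun n α' p := by
  have hag' : ∀ r, r ≤ p + 2^n → α' r = α r := fun r hr => (hag r hr).symm
  have hex : (∃ k, restSeq n α k = p) ↔ (∃ k, restSeq n α' k = p) := by
    constructor
    · rintro ⟨k, hk⟩
      exact ⟨k, by rw [← restSeq_congr hag k (le_of_eq hk)]; exact hk⟩
    · rintro ⟨k, hk⟩
      exact ⟨k, by rw [← restSeq_congr hag' k (le_of_eq hk)]; exact hk⟩
  have hex2 : (∃ k, restSeq n α k + 1 = p) ↔ (∃ k, restSeq n α' k + 1 = p) := by
    constructor
    · rintro ⟨k, hk⟩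
      exact ⟨k, by rw [← restSeq_congr hag k (by omega)]; exact hk⟩
    · rintro ⟨k, hk⟩
      exact ⟨k, by rw [← restSeq_congr hag' k (by omega)]; exact hk⟩
  unfold βfun
  by_cases h1 : ∃ k, restSeq n α k = p
  · rw [dif_pos h1, dif_pos (hex.mp h1)]
    exact (claims_congr hag).1
  · rw [dif_neg h1, dif_neg (fun hc => h1 (hex.mpr hc))]
    by_cases h2 : ∃ k, restSeq n α k + 1 = p
    · rw [dif_pos h2, dif_pos (hex2.mp h2)]
      exact (claims_congr (fun r hr => hag r (by omega))).2.1
    · rw [dif_neg h2, dif_neg (fun hc => h2 (hex2.mpr hc))]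

end Window

/-! ### Delay game plumbing -/

section Plumbing

def off (f : ℕ → ℕ) : ℕ → ℕ
  | 0 => 0
  | i+1 => off f i + f i

lemma off_succ (f : ℕ → ℕ) (i : ℕ) : off f (i+1) = off f i + f i := rfl

lemma off_strictMono {f : ℕ → ℕ} (hf : DelayFn f) : StrictMono (off f) :=
  strictMono_nat_of_lt_succ (fun j => by have := hf j; rw [off_succ]; omega)

lemma off_ge {f : ℕ → ℕ} (hf : DelayFn f) (i : ℕ) : i ≤ off f i := by
  induction i with
  | zero => exact le_rfl
  | succ i ih => have := hf i; rw [off_succ]; omega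

lemma off_f0 {f : ℕ → ℕ} (hf : DelayFn f) (i : ℕ) : f 0 + i ≤ off f (i+1) := by
  induction i with
  | zero => rw [off_succ]; omega
  | succ i ih => have := hf (i+1); rw [off_succ]; omega

variable {I : Type}

lemma oHist_succ (u : ℕ → List I) (i : ℕ) :
    oHist u (i+1) = oHist u i ++ u (i+1) := by
  unfold oHist
  rw [List.range_succ, List.map_append, List.flatten_append]
  simp

lemma oHist_length {f : ℕ → ℕ} {u : ℕ → List I} (hu : ∀ i, (u i).length = f i) (i : ℕ) :
    (oHist u i).length = off f (i+1) := by
  induction i with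
  | zero =>
    show (List.flatten (List.map u (List.range 1))).length = off f 1
    simp [List.range_succ, hu 0, off]
  | succ i ih =>
    rw [oHist_succ, List.length_append, ih, hu (i+1)]
    rfl

lemma oHist_prefix (u : ℕ → List I) {i j : ℕ} (h : i ≤ j) : oHist u i <+: oHist u j := by
  induction j with
  | zero =>
    have h0 : i = 0 := by omega
    subst h0
    exact List.prefix_refl _
  | succ j ih =>
    rcases Nat.lt_or_ge i (j+1) with h1 | h1
    · exact (ih (by omega)).trans (by rw [oHist_succ]; exact List.prefix_append _ _)
    · have h0 : i = j+1 := by omega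
      subst h0
      exact List.prefix_refl _

lemma flatWord_eq_getD [Inhabited I] (u : ℕ → List I) (p : ℕ) :
    flatWord u p = (oHist u p).getD p default := rfl

lemma oHist_eq_map [Inhabited I] {f : ℕ → ℕ} (hf : DelayFn f) {u : ℕ → List I}
    (hu : ∀ i, (u i).length = f i) (m : ℕ) :
    oHist u m = (List.range (off f (m+1))).map (flatWord u) := by
  apply List.ext_getElem
  · rw [oHist_length hu, List.length_map, List.length_range]
  · intro p hp1 hp2
    rw [List.getElem_map, List.getElem_range]
    have hlen : p < (oHist u p).length := by
      rw [oHist_length hu]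
      have := off_ge hf (p+1)
      omega
    rw [flatWord_eq_getD, List.getD_eq_getElem _ _ hlen]
    rcases le_or_gt p m with h | h
    · exact (List.IsPrefix.getElem (oHist_prefix u h) hlen).symm
    · exact (List.IsPrefix.getElem (oHist_prefix u (le_of_lt h)) hp1)

lemma oHist_getElem [Inhabited I] {f : ℕ → ℕ} (hf : DelayFn f) {u : ℕ → List I}
    (hu : ∀ i, (u i).length = f i) (m r : ℕ) (h : r < (oHist u m).length) :
    (oHist u m)[r] = flatWord u r := by
  rw [List.getElem_of_eq (oHist_eq_map hf hu m) h]
  simp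

def roundOf (f : ℕ → ℕ) (L : ℕ) : ℕ :=
  if h : ∃ m, L ≤ off f (m+1) then Nat.find h else 0

lemma roundOf_off {f : ℕ → ℕ} (hf : DelayFn f) (i : ℕ) : roundOf f (off f (i+1)) = i := by
  have hex : ∃ m, off f (i+1) ≤ off f (m+1) := ⟨i, le_rfl⟩
  unfold roundOf
  rw [dif_pos hex]
  refine le_antisymm (Nat.find_le le_rfl) ?_
  by_contra hc
  push_neg at hc
  have hspec := Nat.find_spec hex
  have := off_strictMono hf (show Nat.find hex + 1 < i + 1 by omega)
  omega

def strat (n : ℕ) (f : ℕ → ℕ) : List (Fin (n+1)) → Fin (n+1) :=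
  fun ws => βfun n (fun r => ws.getD r default) (roundOf f ws.length)

lemma strat_consistent {n : ℕ} {f : ℕ → ℕ} (hf : DelayFn f) (hf0 : 2^n + 1 ≤ f 0)
    {u : ℕ → List (Fin (n+1))} (hu : ∀ i, (u i).length = f i) (i : ℕ) :
    strat n f (oHist u i) = βfun n (flatWord u) i := by
  unfold strat
  rw [oHist_length hu, roundOf_off hf]
  apply βfun_congr
  intro r hr
  have hoff : i + 2^n + 1 ≤ off f (i+1) := by
    have := off_f0 hf i
    omega
  have hr2 : r < (oHist u i).length := by
    rw [oHist_length hu]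
    omega
  show (oHist u i).getD r default = flatWord u r
  rw [List.getD_eq_getElem _ _ hr2, oHist_getElem hf hu i r hr2]

end Plumbing


/-! ### Player O wins with lookahead 2^n + 1 -/

section OSide

variable {n : ℕ}

lemma strat_winning {f : ℕ → ℕ} (hf : DelayFn f) (hf0 : 2^n + 1 ≤ f 0) :
    OWinning f (Mach n).Lang (strat n f) := by
  intro u v hu hv
  show PACost.Accepting (Mach n) (Mach n).qI _
  apply accepting_of_bound (2^n + 1)
  intro p
  apply cor_ub ?_ p
  intro q
  show v q = βfun n (flatWord u) q
  rw [hv q]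
  exact strat_consistent hf hf0 hu q

lemma strat_cost_le {f : ℕ → ℕ} (hf : DelayFn f) (hf0 : 2^n + 1 ≤ f 0) :
    stratCost (Mach n).wCost f (strat n f) ≤ ((2^n + 1 : ℕ) : ℕ∞) := by
  unfold stratCost
  apply iSup_le; intro u
  apply iSup_le; intro v
  apply iSup_le; rintro ⟨hu, hv⟩
  unfold PACost.wCost
  apply Filter.limsup_le_of_le (h := Filter.Eventually.of_forall ?_)
  intro p
  apply cor_ub ?_ p
  intro q
  show v q = βfun n (flatWord u) q
  rw [hv q]
  exact strat_consistent hf hf0 hu q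

end OSide

/-! ### Word builders -/

section Words

variable {n : ℕ}

lemma oHist_of_word {I : Type} [Inhabited I] {f : ℕ → ℕ} (g : ℕ → I) (m : ℕ) :
    oHist (fun i => (List.range (f i)).map (fun t => g (off f i + t))) m
      = (List.range (off f (m+1))).map g := by
  induction m with
  | zero =>
    show List.flatten (List.map _ (List.range 1)) = _
    rw [show List.range 1 = [0] from rfl]
    simp only [List.map_cons, List.map_nil, List.flatten_cons, List.flatten_nil,
      List.append_nil]
    show (List.range (f 0)).map (fun t => g (off f 0 + t)) = (List.range (off f 1)).map g
    rw [show off f 1 = f 0 from by rw [off_succ]; show 0 + f 0 = f 0; omega]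
    apply List.map_congr_left
    intro t _
    show g (0 + t) = g t
    rw [Nat.zero_add]
  | succ m ih =>
    rw [oHist_succ, ih, off_succ (f := f) (i := m+1), List.range_add, List.map_append]
    congr 1
    rw [List.map_map]
    rfl

lemma flatWord_of_word {I : Type} [Inhabited I] {f : ℕ → ℕ} (hf : DelayFn f) (g : ℕ → I)
    (p : ℕ) :
    flatWord (fun i => (List.range (f i)).map (fun t => g (off f i + t))) p = g p := by
  rw [flatWord_eq_getD, oHist_of_word g p]
  have hlt : p < off f (p+1) := by have := off_ge hf (p+1); omega
  have hlen : p < ((List.range (off f (p+1))).map g).length := by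
    rw [List.length_map, List.length_range]; exact hlt
  rw [List.getD_eq_getElem _ _ hlen]
  simp

/-- The values of the "ruler block" prevent early flaw detection. -/
lemma nodet_of_ruler {α : ℕ → Fin (n+1)} {m s j : ℕ} (hn : 1 ≤ n)
    (hval : ∀ t, 1 ≤ t → t ≤ 2^n - 1 → (α (m+t)).val = rf (t-1))
    (hs1 : m+2 ≤ s) (hs2 : s < m + 2^n) :
    ¬ DetP α j m s := by
  have h2 : (2:ℕ) ≤ 2^n := by
    calc (2:ℕ) = 2^1 := by norm_num
    _ ≤ 2^n := Nat.pow_le_pow_right (by omega) hn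
  rintro ⟨h1, p, g1, g2, g3, g4⟩
  have hsv : (α s).val = rf (s - m - 1) := by
    have := hval (s - m) (by omega) (by omega)
    have he : m + (s - m) = s := by omega
    rw [he] at this
    exact this
  have hpv : (α p).val = rf (p - m - 1) := by
    have := hval (p - m) (by omega) (by omega)
    have he : m + (p - m) = p := by omega
    rw [he] at this
    exact this
  have heq : rf (p - m - 1) = rf (s - m - 1) := by
    rw [← hpv, ← hsv, g3, h1]
  obtain ⟨r', hr1, hr2, hr3⟩ := rf_between (show p - m - 1 < s - m - 1 by omega) heq
  have hrv : (α (m + (r' + 1))).val = rf r' := by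
    have := hval (r' + 1) (by omega) (by omega)
    have he : r' + 1 - 1 = r' := by omega
    rw [he] at this
    exact this
  have hle := g4 (m + (r' + 1)) (by omega) (by omega)
  rw [hrv] at hle
  rw [← hsv, h1] at hr3
  omega

def rfF (n : ℕ) (t : ℕ) : Fin (n+1) :=
  if h : rf t < n then ⟨rf t, by omega⟩ else ⟨0, by omega⟩

lemma rfF_val {t : ℕ} (h : t + 1 < 2^n) : (rfF n t).val = rf t := by
  unfold rfF
  rw [dif_pos (rf_lt h)]

end Words


/-! ### Cost lower bound: the periodic ruler word -/

section CStar

variable {n : ℕ}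

def cword (n : ℕ) (p : ℕ) : Fin (n+1) :=
  if p % (2^n + 2) = 0 ∨ p % (2^n + 2) = 2^n + 1 then ⟨0, by omega⟩
  else if p % (2^n + 2) = 2^n then hsh n
  else rfF n (p % (2^n + 2) - 1)

lemma cword_mod (k c : ℕ) (hc : c < 2^n + 2) : ((2^n+2) * k + c) % (2^n + 2) = c := by
  rw [Nat.mul_add_mod]
  exact Nat.mod_eq_of_lt hc

lemma cword_spec (k c : ℕ) (hc : c < 2^n+2) :
    cword n ((2^n+2)*k + c) =
      (if c = 0 ∨ c = 2^n + 1 then (⟨0, by omega⟩ : Fin (n+1))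
       else if c = 2^n then hsh n else rfF n (c - 1)) := by
  unfold cword
  rw [cword_mod k c hc]

lemma two_le_two_pow (hn : 1 ≤ n) : 2 ≤ 2^n := by
  calc (2:ℕ) = 2^1 := by norm_num
  _ ≤ 2^n := Nat.pow_le_pow_right (by omega) hn

lemma cw_block (hn : 1 ≤ n) (k t : ℕ) (h1 : 1 ≤ t) (h2 : t ≤ 2^n - 1) :
    (cword n ((2^n+2)*k + t)).val = rf (t-1) := by
  have h2n := two_le_two_pow hn
  rw [cword_spec k t (by omega), if_neg (by omega), if_neg (by omega)]
  exact rfF_val (by omega)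

lemma cw_hash (hn : 1 ≤ n) (k : ℕ) : (cword n ((2^n+2)*k + 2^n)).val = n := by
  have h2n := two_le_two_pow hn
  rw [cword_spec k (2^n) (by omega), if_neg (by omega), if_pos rfl]
  rfl

lemma cstar_step {w : ℕ → Fin (n+1) × Fin (n+1)} (hn : 1 ≤ n)
    (hα : ∀ p, (w p).1 = cword n p)
    (hnb : ∀ p, run n w p ≠ .bad) {k : ℕ}
    (hrest : run n w ((2^n+2)*k) = .rest) :
    run n w ((2^n+2)*k + (2^n + 2)) = .rest ∧
      (∀ r, (2^n+2)*k < r → r < (2^n+2)*k + (2^n+2) → run n w r ≠ .rest) ∧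
      run n w ((2^n+2)*k + 1) ≠ .rest := by
  set m := (2^n+2)*k with hm
  have h2n := two_le_two_pow hn
  have hval : ∀ t, 1 ≤ t → t ≤ 2^n - 1 → (w (m+t)).1.val = rf (t-1) := by
    intro t h1 h2
    rw [hα]
    exact cw_block hn k t h1 h2
  have hnh : ∀ r, m+1 ≤ r → r < m + 2^n → ¬ (w r).1.val = n := by
    intro r g1 g2
    have hv := hval (r - m) (by omega) (by omega)
    have he : m + (r - m) = r := by omega
    rw [he] at hv
    have hr := rf_lt (t := r - m - 1) (k := n) (by omega)
    omega
  have hhash : (w (m + 2^n)).1.val = n := by rw [hα]; exact cw_hash hn k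
  rcases Nat.lt_or_ge ((w m).2.val) n with hc1 | hc1
  · have hll1 : run n w (m+1) = .ll ⟨(w m).2.val, hc1⟩ false := step_rest_ll hrest hc1
    have hllscan : ∀ e, m+2 ≤ e → e ≤ m + 2^n →
        run n w e = .ll ⟨(w m).2.val, hc1⟩ (decide ((w (e-1)).1.val = (w m).2.val)) := by
      intro e he1 he2
      exact llscan hll1 (fun r g1 g2 => hnh r g1 (by omega)) he1
    have hlast0 : (w (m + 2^n - 1)).1.val = 0 := by
      have hv := hval (2^n - 1) (by omega) le_rfl
      have he : m + (2^n - 1) = m + 2^n - 1 := by omega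
      rw [he] at hv
      rw [hv]
      have he2 : 2^n - 1 - 1 = 2^n - 2 := by omega
      rw [he2]
      exact rf_last hn
    have he2n := hllscan (m + 2^n) (by omega) le_rfl
    have hstep := step_ll_hash he2n hhash
    have hflag : (w m).2.val = 0 := by
      by_contra hcon
      have hdf : decide ((w (m + 2^n - 1)).1.val = (w m).2.val) = false := by
        apply decide_eq_false
        rw [hlast0]
        omega
      rw [hdf] at hstep
      exact hnb (m + 2^n + 1) (by simpa using hstep)
    have hdt : decide ((w (m + 2^n - 1)).1.val = (w m).2.val) = true := by
      apply decide_eq_true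
      rw [hlast0, hflag]
    rw [hdt] at hstep
    have hbreath : run n w (m + 2^n + 1) = .breath := by simpa using hstep
    have hrest2 : run n w (m + 2^n + 2) = .rest := step_breath hbreath
    refine ⟨?_, ?_, ?_⟩
    · have he : m + (2^n + 2) = m + 2^n + 2 := by omega
      rw [he]
      exact hrest2
    · intro r g1 g2
      rcases Nat.lt_or_ge r (m+2) with h | h
      · have hre : r = m+1 := by omega
        rw [hre, hll1]
        simp
      · rcases Nat.lt_or_ge r (m + 2^n + 1) with h' | h' 
        · rw [hllscan r h (by omega)]
          simp
        · have hre : r = m + 2^n + 1 := by omega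
          rw [hre, hbreath]
          simp
    · rw [hll1]; simp
  · have hc1' : ¬ (w m).2.val < n := by omega
    have hfin : run n w (m+1) = .finit := step_rest_finit hrest hc1'
    have hw1 : (w (m+1)).1.val = rf 0 := by
      have hv := hval 1 le_rfl (by omega)
      simpa using hv
    have hw1' : ¬ (w (m+1)).1.val = n := by
      rw [hw1, rf_zero]; omega
    exfalso
    rcases Nat.lt_or_ge ((w (m+1)).2.val) n with hc2 | hc2
    · have hfl := step_finit_fl hfin hc2 hw1'
      have hbad := flscanC (j := ⟨(w (m+1)).2.val, hc2⟩) hfl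
        (fun r g1 g2 => hnh r g1 (by omega))
        (fun s g1 g2 => nodet_of_ruler hn (fun t t1 t2 => hval t t1 t2) g1 (by omega))
        (by omega) hhash
      exact hnb _ hbad
    · exact hnb _ (step_finit_bad1 hfin (by omega) hw1')

lemma cstar_forced {w : ℕ → Fin (n+1) × Fin (n+1)} (hn : 1 ≤ n)
    (hα : ∀ p, (w p).1 = cword n p) (hnb : ∀ p, run n w p ≠ .bad) :
    ∀ k, run n w ((2^n+2)*k) = .rest := by
  intro k
  induction k with
  | zero =>
    have he : (2^n+2)*0 = 0 := by omega
    rw [he]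
    rfl
  | succ k ih =>
    have hstep := (cstar_step hn hα hnb ih).1
    have he : (2^n+2)*k + (2^n+2) = (2^n+2)*(k+1) := by ring
    rw [he] at hstep
    exact hstep

lemma cstar_cor {w : ℕ → Fin (n+1) × Fin (n+1)} (hn : 1 ≤ n)
    (hα : ∀ p, (w p).1 = cword n p) (hnb : ∀ p, run n w p ≠ .bad) (k : ℕ) :
    PACost.Cor (Mach n) (Mach n).qI w ((2^n+2)*k + 1) = ((2^n + 1 : ℕ) : ℕ∞) := by
  have h2n := two_le_two_pow hn
  obtain ⟨h1, h2, h3⟩ := cstar_step hn hα hnb (cstar_forced hn hα hnb k)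
  have hceq := cor_eq h3 h1 (by omega) (fun r g1 g2 => h2 r (by omega) g2)
  rw [hceq]
  have harith : ((2^n+2)*k + (2^n+2)) - ((2^n+2)*k + 1) = 2^n + 1 := by omega
  rw [harith]

lemma cost_lower {f : ℕ → ℕ} (hf : DelayFn f) (hn : 1 ≤ n)
    (τO : List (Fin (n+1)) → Fin (n+1)) (hwin : OWinning f (Mach n).Lang τO) :
    ((2^n + 1 : ℕ) : ℕ∞) ≤ stratCost (Mach n).wCost f τO := by
  have h2n := two_le_two_pow hn
  set u : ℕ → List (Fin (n+1)) :=
    fun i => (List.range (f i)).map (fun t => cword n (off f i + t)) with hu_def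
  have hu : ∀ i, (u i).length = f i := by intro i; simp [hu_def]
  set v : ℕ → Fin (n+1) := fun i => τO (oHist u i) with hv_def
  have hv : ∀ i, v i = τO (oHist u i) := fun i => rfl
  have hmem : (fun p => (flatWord u p, v p)) ∈ (Mach n).Lang := hwin u v hu hv
  have hα : ∀ p, ((fun p => (flatWord u p, v p)) p).1 = cword n p :=
    fun p => flatWord_of_word hf (cword n) p
  have hnb : ∀ p, run n (fun p => (flatWord u p, v p)) p ≠ .bad := by
    intro p hbad
    exact rejected_of_bad hbad hmem
  have hcost : ((2^n + 1 : ℕ) : ℕ∞) ≤ (Mach n).wCost (fun p => (flatWord u p, v p)) := by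
    unfold PACost.wCost
    apply limsup_ge_of_often
    intro K
    refine ⟨(2^n+2)*K + 1, ?_, ?_⟩
    · have hK : K ≤ (2^n+2)*K := Nat.le_mul_of_pos_left K (by omega)
      omega
    · rw [cstar_cor hn hα hnb K]
  refine le_trans hcost ?_
  unfold stratCost
  exact le_iSup_of_le u (le_iSup_of_le v (le_iSup_of_le ⟨hu, hv⟩ le_rfl))

end CStar

/-! ### Lookahead lower bound -/

section Threshold

variable {n : ℕ}

def tword (n : ℕ) (c1 : Fin (n+1)) (p : ℕ) : Fin (n+1) :=
  if p = 0 then ⟨0, by omega⟩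
  else if p ≤ 2^n - 1 then rfF n (p-1)
  else if p = 2^n then
    (if c1.val = n then hsh n else if c1.val = 0 then ⟨1 % (n+1), Nat.mod_lt _ (by omega)⟩
      else ⟨0, by omega⟩)
  else hsh n

lemma tword_lt (c c' : Fin (n+1)) (t : ℕ) (ht : t < 2^n) : tword n c t = tword n c' t := by
  have h1n : (1:ℕ) ≤ 2^n := Nat.one_le_two_pow
  unfold tword
  rcases Nat.eq_zero_or_pos t with h | h
  · rw [if_pos h, if_pos h]
  · rw [if_neg (show ¬ t = 0 by omega), if_neg (show ¬ t = 0 by omega),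
      if_pos (show t ≤ 2^n - 1 by omega), if_pos (show t ≤ 2^n - 1 by omega)]

theorem threshold_lower {f : ℕ → ℕ} (hf : DelayFn f) (hn : 2 ≤ n) (hf0 : f 0 ≤ 2^n)
    (τO : List (Fin (n+1)) → Fin (n+1)) (hwin : OWinning f (Mach n).Lang τO) : False := by
  have h2n := two_le_two_pow (n := n) (by omega)
  set c1 : Fin (n+1) := τO ((List.range (f 0)).map (fun t => tword n (hsh n) t)) with hc1_def
  set u : ℕ → List (Fin (n+1)) :=
    fun i => (List.range (f i)).map (fun t => tword n c1 (off f i + t)) with hu_def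
  have hu : ∀ i, (u i).length = f i := by intro i; simp [hu_def]
  set v : ℕ → Fin (n+1) := fun i => τO (oHist u i) with hv_def
  have hv : ∀ i, v i = τO (oHist u i) := fun i => rfl
  have hmem : (fun p => (flatWord u p, v p)) ∈ (Mach n).Lang := hwin u v hu hv
  set w : ℕ → Fin (n+1) × Fin (n+1) := fun p => (flatWord u p, v p) with hw_def
  have hα : ∀ p, (w p).1 = tword n c1 p :=
    fun p => flatWord_of_word hf (tword n c1) p
  have hv0 : (w 0).2 = c1 := by
    show v 0 = c1
    rw [hv 0]
    have hh : oHist u 0 = (List.range (f 0)).map (fun t => tword n (hsh n) t) := by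
      have h0 := oHist_of_word (f := f) (fun t => tword n c1 t) 0
      have hoff1 : off f 1 = f 0 := by rw [off_succ]; show 0 + f 0 = f 0; omega
      rw [hu_def]
      rw [h0, hoff1]
      apply List.map_congr_left
      intro t ht
      rw [List.mem_range] at ht
      exact tword_lt c1 (hsh n) t (by omega)
    rw [hh]
  have hval : ∀ t, 1 ≤ t → t ≤ 2^n - 1 → (w t).1.val = rf (t-1) := by
    intro t h1 h2
    rw [hα]
    show (tword n c1 t).val = rf (t-1)
    unfold tword
    rw [if_neg (by omega), if_pos h2]
    exact rfF_val (by omega)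
  have hx : (w (2^n)).1 =
      (if c1.val = n then hsh n else if c1.val = 0 then ⟨1 % (n+1), Nat.mod_lt _ (by omega)⟩
        else ⟨0, by omega⟩) := by
    rw [hα]
    unfold tword
    rw [if_neg (by omega), if_neg (by omega), if_pos rfl]
  have hhash2 : ∀ p, 2^n + 1 ≤ p → (w p).1.val = n := by
    intro p hp
    rw [hα]
    unfold tword
    rw [if_neg (by omega), if_neg (by omega), if_neg (by omega)]
    rfl
  have hrest0 : run n w 0 = .rest := rfl
  have hbad : ∃ p, run n w p = .bad := by
    rcases Nat.lt_or_ge (c1.val) n with hc | hc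
    · -- last-letter claim, but the last block letter differs
      have hb : (w 0).2.val < n := by rw [hv0]; exact hc
      have h1 : run n w (0+1) = .ll ⟨(w 0).2.val, hb⟩ false := step_rest_ll hrest0 hb
      have hnh : ∀ r, 0+1 ≤ r → r < 2^n + 1 → ¬ (w r).1.val = n := by
        intro r g1 g2 hcon
        rcases Nat.lt_or_ge r (2^n) with h | h
        · have hv' := hval r (by omega) (by omega)
          have := rf_lt (t := r - 1) (k := n) (by omega)
          omega
        · have hre : r = 2^n := by omega
          subst hre
          rw [hx] at hcon
          rw [if_neg (by omega)] at hcon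
          rcases Nat.eq_zero_or_pos (c1.val) with h0 | h0
          · rw [if_pos h0] at hcon
            have h1m : (1 % (n+1) : ℕ) = n := hcon
            rw [Nat.mod_eq_of_lt (by omega)] at h1m
            omega
          · rw [if_neg (by omega)] at hcon
            have : (0 : ℕ) = n := hcon
            omega
      have hsc := llscan h1 hnh (show 0+2 ≤ 2^n + 1 by omega)
      have hflagf : decide ((w (2^n + 1 - 1)).1.val = (w 0).2.val) = false := by
        apply decide_eq_false
        have he : 2^n + 1 - 1 = 2^n := by omega
        rw [he, hx, hv0]
        rw [if_neg (by omega)]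
        rcases Nat.eq_zero_or_pos (c1.val) with h0 | h0
        · rw [if_pos h0]
          intro hcc
          have h1m : (1 % (n+1) : ℕ) = c1.val := hcc
          rw [Nat.mod_eq_of_lt (by omega)] at h1m
          omega
        · rw [if_neg (by omega)]
          intro hcc
          have : (0:ℕ) = c1.val := hcc
          omega
      rw [hflagf] at hsc
      have hbadstep := step_ll_hash hsc (hhash2 (2^n+1) le_rfl)
      exact ⟨2^n + 1 + 1, by simpa using hbadstep⟩
    · -- hash claim
      have hc1n : ¬ (w 0).2.val < n := by rw [hv0]; omega
      have h1 : run n w (0+1) = .finit := step_rest_finit hrest0 hc1n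
      have hw1' : ¬ (w (0+1)).1.val = n := by
        have hv' := hval 1 le_rfl (by omega)
        rw [hv', rf_zero]
        omega
      rcases Nat.lt_or_ge ((w (0+1)).2.val) n with hc2 | hc2
      · have hfl := step_finit_fl h1 hc2 hw1'
        have hnh2 : ∀ r, 0+1 ≤ r → r < 2^n → ¬ (w r).1.val = n := by
          intro r g1 g2 hcon
          have hv' := hval r g1 (by omega)
          have := rf_lt (t := r - 1) (k := n) (by omega)
          rw [hv'] at hcon
          omega
        have hnd2 : ∀ s, 0+2 ≤ s → s < 2^n →
            ¬ DetP (fun p => (w p).1) ((⟨(w (0+1)).2.val, hc2⟩ : Fin n)).val 0 s := by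
          intro s g1 g2
          refine nodet_of_ruler (by omega) ?_ g1 (by omega)
          intro t t1 t2
          show (w (0 + t)).1.val = rf (t - 1)
          rw [Nat.zero_add]
          exact hval t t1 t2
        have hhh : (w (2^n)).1.val = n := by
          rw [hx, if_pos (by have := c1.isLt; omega)]
          rfl
        have hbadstep := flscanC (m := 0) (e := 2^n) (j := ⟨(w (0+1)).2.val, hc2⟩) hfl
          hnh2 hnd2 (by omega) hhh
        exact ⟨2^n + 1, hbadstep⟩
      · exact ⟨0+1+1, step_finit_bad1 h1 (by omega) hw1'⟩
  obtain ⟨p, hp⟩ := hbad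
  exact rejected_of_bad hp hmem

end Threshold


end S3

/-- Proposition 1, lower bounds. There is a linear-size family of finitary
Büchi automata `A_n` over `{1, …, n, #}²` (modeled as `Fin (n+1)`, with `#` the last letter)
such that Player O wins `Γ_f(L(A_n))` iff `f 0 ≥ 2^n + 1`, and for every such `f` an optimal
winning strategy for Player O exists and has cost `2^n + 1`. -/
theorem statement3 :
    ∃ c : ℕ, 0 < c ∧ ∀ n : ℕ, 1 < n →
      ∃ m : ℕ, ∃ M : PACost (Fin m) (Fin (n + 1) × Fin (n + 1)),
        m ≤ c * n ∧ M.FinBuchi ∧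
        (∀ f : ℕ → ℕ, DelayFn f → (OWins f M.Lang ↔ 2 ^ n + 1 ≤ f 0)) ∧
        (∀ f : ℕ → ℕ, DelayFn f → 2 ^ n + 1 ≤ f 0 →
          OptimalCostIs M.Lang M.wCost f ((2 ^ n + 1 : ℕ) : ℕ∞)) := by
  refine ⟨8, by omega, ?_⟩
  intro n hn
  refine ⟨4*n+4, S3.Mach n, by omega, ?_, ?_, ?_⟩
  · exact ⟨fun q a => rfl, fun q => S3.Ωst_cases _⟩
  · intro f hf
    constructor
    · intro hOW
      by_contra hcon
      push_neg at hcon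
      obtain ⟨τO, hτO⟩ := hOW
      exact S3.threshold_lower hf hn (by omega) τO hτO
    · intro hf0
      exact ⟨S3.strat n f, S3.strat_winning hf hf0⟩
  · intro f hf hf0
    constructor
    · refine ⟨S3.strat n f, S3.strat_winning hf hf0, ?_⟩
      refine le_antisymm (S3.strat_cost_le hf hf0) ?_
      exact S3.cost_lower hf (by omega) _ (S3.strat_winning hf hf0)
    · intro τO hτO
      exact S3.cost_lower hf (by omega) τO hτO
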